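/- Fundamental Theorem: Given any three distinct points P, Q, R on a line l, and any three distinct points P', Q', R' on a line m, there exists a projectivity π from the range of l to the range of m with π(P) = P', π(Q) = Q', π(R) = R'; moreover π is unique, in the sense that any two projectivities from the range of l to the range of m sending P, Q, R to P', Q', R' respectively agree at every point of l. -/
import Mathlib


open Configuration

universe u
variable (P L : Type u) [Membership P L]

/-- Three points are collinear if some line passes through all three. -/
def Col (A B C : P) : Prop := ∃ l : L, A ∈ l ∧ B ∈ l ∧ C ∈ l

/-- Every line of `L` is incident with at least `n` distinct points. -/
def LinesHaveAtLeast (n : ℕ) : Prop :=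
  ∀ l : L, ∃ s : Finset P, n ≤ s.card ∧ ∀ X ∈ s, X ∈ l

/-- The range of a line `l` : the points incident with `l`. -/
abbrev Rng (l : L) : Type _ := {X : P // X ∈ l}

/-- `f` is the perspectivity from the range of `l` to the range of `m` with
center `O`, a point outside both `l` and `m` : each point `X` of `l` is mapped
to the point `(OX)·m`, i.e. `O`, `X` and `f X` are collinear. -/
def IsPerspectivity (l m : L) (f : Rng P L l → Rng P L m) : Prop :=
  ∃ O : P, O ∉ l ∧ O ∉ m ∧
    ∀ X : Rng P L l, ∃ k : L, O ∈ k ∧ (X : P) ∈ k ∧ ((f X : P)) ∈ k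

/-- A projectivity between ranges of lines : a composite of finitely many
perspectivities. -/
inductive IsProjectivity : (l m : L) → (Rng P L l → Rng P L m) → Prop where
  | persp {l m : L} {f : Rng P L l → Rng P L m} :
      IsPerspectivity P L l m f → IsProjectivity l m f
  | comp {l m n : L} {f : Rng P L l → Rng P L m} {g : Rng P L m → Rng P L n} :
      IsProjectivity l m f → IsProjectivity m n g → IsProjectivity l n (g ∘ f)

/-- The pencil of a point `U` : the lines incident with `U`. -/
abbrev Pcl (U : P) : Type _ := {k : L // U ∈ k}

/-- `f` is the perspectivity from the pencil of `U` to the pencil of `V` with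
axis `a`, a line avoiding both `U` and `V` : each line `k` through `U` is mapped
to the line joining `V` to `k·a`, i.e. `k`, `a` and `f k` are concurrent. -/
def IsPencilPerspectivity (U V : P) (f : Pcl P L U → Pcl P L V) : Prop :=
  ∃ a : L, U ∉ a ∧ V ∉ a ∧
    ∀ k : Pcl P L U, ∃ X : P, X ∈ (k : L) ∧ X ∈ a ∧ X ∈ ((f k : L))

/-- A projectivity between pencils of points : a composite of finitely many
perspectivities between pencils. -/
inductive IsPencilProjectivity : (U V : P) → (Pcl P L U → Pcl P L V) → Prop where
  | persp {U V : P} {f : Pcl P L U → Pcl P L V} :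
      IsPencilPerspectivity P L U V f → IsPencilProjectivity U V f
  | comp {U V W : P} {f : Pcl P L U → Pcl P L V} {g : Pcl P L V → Pcl P L W} :
      IsPencilProjectivity U V f → IsPencilProjectivity V W g →
      IsPencilProjectivity U W (g ∘ f)

/-- Axiom T: every projectivity of the range of a line (or of the pencil of
lines through a point) onto itself having three distinct fixed elements is the
identity. -/
def AxiomT : Prop :=
  (∀ (l : L) (f : Rng P L l → Rng P L l), IsProjectivity P L l l f →
    (∃ X Y Z : Rng P L l, X ≠ Y ∧ X ≠ Z ∧ Y ≠ Z ∧ f X = X ∧ f Y = Y ∧ f Z = Z) →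
    ∀ W, f W = W) ∧
  (∀ (U : P) (g : Pcl P L U → Pcl P L U), IsPencilProjectivity P L U U g →
    (∃ x y z : Pcl P L U, x ≠ y ∧ x ≠ z ∧ y ≠ z ∧ g x = x ∧ g y = y ∧ g z = z) →
    ∀ w, g w = w)

section FTaux

open Configuration.HasPoints Configuration.HasLines

variable {P L} [Configuration.ProjectivePlane P L]

lemma FT.pt_unique {X Y : P} {l m : L} (hlm : l ≠ m)
    (hXl : X ∈ l) (hXm : X ∈ m) (hYl : Y ∈ l) (hYm : Y ∈ m) : X = Y :=
  (Configuration.Nondegenerate.eq_or_eq hXl hYl hXm hYm).resolve_right hlm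

lemma FT.line_unique {X Y : P} {l m : L} (hXY : X ≠ Y)
    (hXl : X ∈ l) (hYl : Y ∈ l) (hXm : X ∈ m) (hYm : Y ∈ m) : l = m :=
  (Configuration.Nondegenerate.eq_or_eq hXl hYl hXm hYm).resolve_left hXY

/-- The explicit perspectivity with center `O`. -/
noncomputable def FT.perspMap {l m : L} {O : P} (hOl : O ∉ l) (hOm : O ∉ m)
    (X : Rng P L l) : Rng P L m :=
  have hne : O ≠ (X : P) := fun h => hOl (h ▸ X.2)
  have hk : mkLine hne ≠ m := fun h => hOm (h ▸ (mkLine_ax hne).1)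
  ⟨mkPoint hk, (mkPoint_ax hk).2⟩

lemma FT.perspMap_mem {l m : L} {O : P} (hOl : O ∉ l) (hOm : O ∉ m)
    (X : Rng P L l) (hne : O ≠ (X : P)) :
    ((FT.perspMap hOl hOm X : P)) ∈ (mkLine hne : L) := by
  have hk : mkLine hne ≠ m := fun h => hOm (h ▸ (mkLine_ax hne).1)
  exact (mkPoint_ax hk).1

lemma FT.perspMap_eq {l m : L} {O : P} (hOl : O ∉ l) (hOm : O ∉ m)
    (X : Rng P L l) {Y : P} (hY : Y ∈ m) {k : L}
    (hOk : O ∈ k) (hXk : (X : P) ∈ k) (hYk : Y ∈ k) :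
    FT.perspMap hOl hOm X = ⟨Y, hY⟩ := by
  have hne : O ≠ (X : P) := fun h => hOl (h ▸ X.2)
  have hk : mkLine hne ≠ m := fun h => hOm (h ▸ (mkLine_ax hne).1)
  have hkeq : k = mkLine hne :=
    FT.line_unique hne hOk hXk (mkLine_ax hne).1 (mkLine_ax hne).2
  apply Subtype.ext
  show mkPoint hk = Y
  exact FT.pt_unique hk (mkPoint_ax hk).1 (mkPoint_ax hk).2 (hkeq ▸ hYk) hY

lemma FT.perspMap_isPersp {l m : L} {O : P} (hOl : O ∉ l) (hOm : O ∉ m) :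
    IsPerspectivity P L l m (FT.perspMap hOl hOm) := by
  refine ⟨O, hOl, hOm, fun X => ?_⟩
  have hne : O ≠ (X : P) := fun h => hOl (h ▸ X.2)
  exact ⟨mkLine hne, (mkLine_ax hne).1, (mkLine_ax hne).2, FT.perspMap_mem hOl hOm X hne⟩

lemma FT.perspMap_inv {l m : L} {O : P} (hOl : O ∉ l) (hOm : O ∉ m)
    (X : Rng P L l) : FT.perspMap hOm hOl (FT.perspMap hOl hOm X) = X := by
  have hne : O ≠ (X : P) := fun h => hOl (h ▸ X.2)
  exact FT.perspMap_eq hOm hOl _ X.2 (k := mkLine hne) (mkLine_ax hne).1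
    (FT.perspMap_mem hOl hOm X hne) (mkLine_ax hne).2

lemma FT.persp_eq {l m : L} {f : Rng P L l → Rng P L m} {O : P}
    (hOl : O ∉ l) (hOm : O ∉ m)
    (hcol : ∀ X : Rng P L l, ∃ k : L, O ∈ k ∧ (X : P) ∈ k ∧ ((f X : P)) ∈ k)
    (X : Rng P L l) : f X = FT.perspMap hOl hOm X := by
  obtain ⟨k, hOk, hXk, hfk⟩ := hcol X
  exact (FT.perspMap_eq hOl hOm X (f X).2 hOk hXk hfk).symm

/-- Every projectivity has a two-sided inverse projectivity. -/
lemma FT.proj_inverse {l m : L} {f : Rng P L l → Rng P L m}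
    (h : IsProjectivity P L l m f) :
    ∃ g : Rng P L m → Rng P L l, IsProjectivity P L m l g ∧
      (∀ X, g (f X) = X) ∧ (∀ Y, f (g Y) = Y) := by
  induction h with
  | persp hf =>
    obtain ⟨O, hOl, hOm, hcol⟩ := hf
    refine ⟨FT.perspMap hOm hOl, .persp (FT.perspMap_isPersp hOm hOl),
      fun X => ?_, fun Y => ?_⟩
    · rw [FT.persp_eq hOl hOm hcol X]; exact FT.perspMap_inv hOl hOm X
    · rw [FT.persp_eq hOl hOm hcol (FT.perspMap hOm hOl Y)]
      exact FT.perspMap_inv hOm hOl Y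
  | comp _ _ ih1 ih2 =>
    obtain ⟨g1, hg1, hl1, hr1⟩ := ih1
    obtain ⟨g2, hg2, hl2, hr2⟩ := ih2
    exact ⟨g1 ∘ g2, .comp hg2 hg1,
      fun X => by simp only [Function.comp_apply, hl2, hl1],
      fun Y => by simp only [Function.comp_apply, hr1, hr2]⟩

lemma FT.exists_on_ne (h6 : LinesHaveAtLeast P L 6) (l : L) (a b c d e : P) :
    ∃ X : P, X ∈ l ∧ X ≠ a ∧ X ≠ b ∧ X ≠ c ∧ X ≠ d ∧ X ≠ e := by
  classical
  obtain ⟨s, hcard, hs⟩ := h6 l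
  by_contra h
  push_neg at h
  have hsub : s ⊆ {a, b, c, d, e} := by
    intro x hx
    simp only [Finset.mem_insert, Finset.mem_singleton]
    by_contra hx'
    push_neg at hx'
    exact hx'.2.2.2.2 (h x (hs x hx) hx'.1 hx'.2.1 hx'.2.2.1 hx'.2.2.2.1)
  have c0 := Finset.card_le_card hsub
  have c1 := Finset.card_insert_le a ({b, c, d, e} : Finset P)
  have c2 := Finset.card_insert_le b ({c, d, e} : Finset P)
  have c3 := Finset.card_insert_le c ({d, e} : Finset P)
  have c4 := Finset.card_insert_le d ({e} : Finset P)
  have c5 : ({e} : Finset P).card = 1 := Finset.card_singleton e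
  omega

/-- A point off two given lines, distinct from a given point. -/
lemma FT.exists_off_two_ne (h6 : LinesHaveAtLeast P L 6) (l m : L) (A : P) :
    ∃ O : P, O ∉ l ∧ O ∉ m ∧ O ≠ A := by
  by_cases hlm : l = m
  · subst hlm
    obtain ⟨Q, hQ⟩ := Configuration.Nondegenerate.exists_point (P := P) l
    obtain ⟨Y, hYl, -⟩ := FT.exists_on_ne h6 l Q Q Q Q Q
    have hQY : Q ≠ Y := fun h => hQ (h ▸ hYl)
    have hkl : mkLine hQY ≠ l := fun h => hQ (h ▸ (mkLine_ax hQY).1)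
    obtain ⟨W, hWk, hWY, hWA, -⟩ := FT.exists_on_ne h6 (mkLine hQY) Y A Y A Y
    have hWl : W ∉ l := fun h =>
      hWY (FT.pt_unique hkl hWk h (mkLine_ax hQY).2 hYl)
    exact ⟨W, hWl, hWl, hWA⟩
  · obtain ⟨Y, hYl, hYX, -⟩ := FT.exists_on_ne h6 l (mkPoint hlm)
      (mkPoint hlm) (mkPoint hlm) (mkPoint hlm) (mkPoint hlm)
    obtain ⟨Z, hZm, hZX, hZY, -⟩ := FT.exists_on_ne h6 m (mkPoint hlm) Y
      (mkPoint hlm) Y (mkPoint hlm)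
    have hYZ : Y ≠ Z := hZY.symm
    obtain ⟨W, hWk, hWY, hWZ, hWA, -⟩ :=
      FT.exists_on_ne h6 (mkLine hYZ) Y Z A Y Z
    have hWl : W ∉ l := by
      intro h
      have hkeq : mkLine hYZ = l :=
        FT.line_unique hWY hWk (mkLine_ax hYZ).1 h hYl
      have hZl : Z ∈ l := hkeq ▸ (mkLine_ax hYZ).2
      exact hZX (FT.pt_unique hlm hZl hZm (mkPoint_ax hlm).1 (mkPoint_ax hlm).2)
    have hWm : W ∉ m := by
      intro h
      have hkeq : mkLine hYZ = m :=
        FT.line_unique hWZ hWk (mkLine_ax hYZ).2 h hZm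
      have hYm : Y ∈ m := hkeq ▸ (mkLine_ax hYZ).1
      exact hYX (FT.pt_unique hlm hYl hYm (mkPoint_ax hlm).1 (mkPoint_ax hlm).2)
    exact ⟨W, hWl, hWm, hWA⟩

/-- A line through a given point, distinct from two given lines. -/
lemma FT.exists_line_through_ne (h6 : LinesHaveAtLeast P L 6) (A : P) (l m : L) :
    ∃ n : L, A ∈ n ∧ n ≠ l ∧ n ≠ m := by
  obtain ⟨O, hOl, hOm, hOA⟩ := FT.exists_off_two_ne h6 l m A
  have hAO : A ≠ O := fun h => hOA h.symm
  exact ⟨mkLine hAO, (mkLine_ax hAO).1,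
    fun h => hOl (h ▸ (mkLine_ax hAO).2),
    fun h => hOm (h ▸ (mkLine_ax hAO).2)⟩

/-- One perspectivity suffices when the common point of the two distinct lines
is the anchor and is fixed. -/
lemma FT.persp_three {l m : L} (hlm : l ≠ m) {A B C B' C' : P}
    (hAl : A ∈ l) (hAm : A ∈ m) (hB : B ∈ l) (hC : C ∈ l)
    (hB' : B' ∈ m) (hC' : C' ∈ m)
    (hAB : A ≠ B) (hAC : A ≠ C) (hBC : B ≠ C)
    (hAB' : A ≠ B') (hAC' : A ≠ C') (hBC' : B' ≠ C') :
    ∃ f : Rng P L l → Rng P L m, IsProjectivity P L l m f ∧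
      f ⟨A, hAl⟩ = ⟨A, hAm⟩ ∧ f ⟨B, hB⟩ = ⟨B', hB'⟩ ∧ f ⟨C, hC⟩ = ⟨C', hC'⟩ := by
  have hB'l : B' ∉ l := fun h => hAB' (FT.pt_unique hlm hAl hAm h hB')
  have hC'l : C' ∉ l := fun h => hAC' (FT.pt_unique hlm hAl hAm h hC')
  have hBm : B ∉ m := fun h => hAB (FT.pt_unique hlm hAl hAm hB h)
  have hCm : C ∉ m := fun h => hAC (FT.pt_unique hlm hAl hAm hC h)
  have hBB' : B ≠ B' := fun h => hB'l (h ▸ hB)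
  have hCC' : C ≠ C' := fun h => hC'l (h ▸ hC)
  have hkBC : (mkLine hBB' : L) ≠ mkLine hCC' := by
    intro h
    have hlkC : l = mkLine hCC' :=
      FT.line_unique hBC hB hC (h ▸ (mkLine_ax hBB').1) (mkLine_ax hCC').1
    exact hC'l (by rw [hlkC]; exact (mkLine_ax hCC').2)
  have hOkB : mkPoint hkBC ∈ (mkLine hBB' : L) := (mkPoint_ax hkBC).1
  have hOkC : mkPoint hkBC ∈ (mkLine hCC' : L) := (mkPoint_ax hkBC).2
  have hOl : mkPoint hkBC ∉ l := by
    intro h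
    by_cases hOB : mkPoint hkBC = B
    · have : (mkLine hCC' : L) = l :=
        FT.line_unique hBC (hOB ▸ hOkC) (mkLine_ax hCC').1 hB hC
      exact hC'l (this ▸ (mkLine_ax hCC').2)
    · have : (mkLine hBB' : L) = l :=
        FT.line_unique hOB hOkB (mkLine_ax hBB').1 h hB
      exact hB'l (this ▸ (mkLine_ax hBB').2)
  have hOm : mkPoint hkBC ∉ m := by
    intro h
    by_cases hOB : mkPoint hkBC = B'
    · have : (mkLine hCC' : L) = m :=
        FT.line_unique hBC' (hOB ▸ hOkC) (mkLine_ax hCC').2 hB' hC'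
      exact hCm (this ▸ (mkLine_ax hCC').1)
    · have : (mkLine hBB' : L) = m :=
        FT.line_unique hOB hOkB (mkLine_ax hBB').2 h hB'
      exact hBm (this ▸ (mkLine_ax hBB').1)
  have hneA : mkPoint hkBC ≠ A := fun h => hOl (h ▸ hAl)
  refine ⟨FT.perspMap hOl hOm, .persp (FT.perspMap_isPersp hOl hOm), ?_, ?_, ?_⟩
  · exact FT.perspMap_eq hOl hOm _ hAm (mkLine_ax hneA).1 (mkLine_ax hneA).2
      (mkLine_ax hneA).2
  · exact FT.perspMap_eq hOl hOm _ hB' hOkB (mkLine_ax hBB').1 (mkLine_ax hBB').2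
  · exact FT.perspMap_eq hOl hOm _ hC' hOkC (mkLine_ax hCC').1 (mkLine_ax hCC').2

/-- Two perspectivities suffice for distinct lines when `A' ∉ l`. -/
lemma FT.proj_anchored (h6 : LinesHaveAtLeast P L 6) {l m : L} (hlm : l ≠ m)
    {A B C A' B' C' : P} (hA : A ∈ l) (hB : B ∈ l) (hC : C ∈ l)
    (hA' : A' ∈ m) (hB' : B' ∈ m) (hC' : C' ∈ m)
    (hAB : A ≠ B) (hAC : A ≠ C) (hBC : B ≠ C)
    (hAB' : A' ≠ B') (hAC' : A' ≠ C') (hBC' : B' ≠ C')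
    (hA'l : A' ∉ l) :
    ∃ f : Rng P L l → Rng P L m, IsProjectivity P L l m f ∧
      f ⟨A, hA⟩ = ⟨A', hA'⟩ ∧ f ⟨B, hB⟩ = ⟨B', hB'⟩ ∧ f ⟨C, hC⟩ = ⟨C', hC'⟩ := by
  have hAA' : A ≠ A' := fun h => hA'l (h ▸ hA)
  have hkl : (mkLine hAA' : L) ≠ l := fun h => hA'l (h ▸ (mkLine_ax hAA').2)
  obtain ⟨n, hA'n, hnm, hnk⟩ := FT.exists_line_through_ne h6 A' m (mkLine hAA')
  have hAn : A ∉ n := fun h =>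
    hnk (FT.line_unique hAA' h hA'n (mkLine_ax hAA').1 (mkLine_ax hAA').2)
  have hkn : (mkLine hAA' : L) ≠ n := fun h => hAn (h ▸ (mkLine_ax hAA').1)
  obtain ⟨O, hOk, hOA, hOA', -⟩ := FT.exists_on_ne h6 (mkLine hAA') A A' A A' A
  have hOl : O ∉ l := fun h =>
    hOA (FT.pt_unique hkl hOk h (mkLine_ax hAA').1 hA)
  have hOn : O ∉ n := fun h =>
    hOA' (FT.pt_unique hkn hOk h (mkLine_ax hAA').2 hA'n)
  have hf1A : FT.perspMap hOl hOn ⟨A, hA⟩ = ⟨A', hA'n⟩ :=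
    FT.perspMap_eq hOl hOn _ hA'n hOk (mkLine_ax hAA').1 (mkLine_ax hAA').2
  set B₁ := FT.perspMap hOl hOn ⟨B, hB⟩ with hB₁
  set C₁ := FT.perspMap hOl hOn ⟨C, hC⟩ with hC₁
  have hinj : ∀ X Y : Rng P L l,
      FT.perspMap hOl hOn X = FT.perspMap hOl hOn Y → X = Y := by
    intro X Y h
    have := congrArg (FT.perspMap hOn hOl) h
    rwa [FT.perspMap_inv, FT.perspMap_inv] at this
  have hA'B₁ : A' ≠ (B₁ : P) := fun h =>
    hAB (Subtype.ext_iff.mp (hinj _ _ (hf1A.trans (Subtype.ext h))))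
  have hA'C₁ : A' ≠ (C₁ : P) := fun h =>
    hAC (Subtype.ext_iff.mp (hinj _ _ (hf1A.trans (Subtype.ext h))))
  have hB₁C₁ : (B₁ : P) ≠ (C₁ : P) := fun h =>
    hBC (Subtype.ext_iff.mp (hinj _ _ (Subtype.ext h)))
  obtain ⟨f₂, hf₂, hf₂A, hf₂B, hf₂C⟩ := FT.persp_three hnm hA'n hA' B₁.2 C₁.2
    hB' hC' hA'B₁ hA'C₁ hB₁C₁ hAB' hAC' hBC'
  refine ⟨f₂ ∘ FT.perspMap hOl hOn,
    .comp (.persp (FT.perspMap_isPersp hOl hOn)) hf₂, ?_, ?_, ?_⟩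
  · show f₂ (FT.perspMap hOl hOn ⟨A, hA⟩) = _
    rw [hf1A]; exact hf₂A
  · exact hf₂B
  · exact hf₂C

/-- Existence for distinct lines. -/
lemma FT.proj_of_ne (h6 : LinesHaveAtLeast P L 6) {l m : L} (hlm : l ≠ m)
    {A B C A' B' C' : P} (hA : A ∈ l) (hB : B ∈ l) (hC : C ∈ l)
    (hA' : A' ∈ m) (hB' : B' ∈ m) (hC' : C' ∈ m)
    (hAB : A ≠ B) (hAC : A ≠ C) (hBC : B ≠ C)
    (hAB' : A' ≠ B') (hAC' : A' ≠ C') (hBC' : B' ≠ C') :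
    ∃ f : Rng P L l → Rng P L m, IsProjectivity P L l m f ∧
      f ⟨A, hA⟩ = ⟨A', hA'⟩ ∧ f ⟨B, hB⟩ = ⟨B', hB'⟩ ∧ f ⟨C, hC⟩ = ⟨C', hC'⟩ := by
  by_cases hA'l : A' ∈ l
  · have hB'l : B' ∉ l := fun h => hAB' (FT.pt_unique hlm hA'l hA' h hB')
    obtain ⟨f, hf, h1, h2, h3⟩ := FT.proj_anchored h6 hlm hB hA hC hB' hA' hC'
      hAB.symm hBC hAC hAB'.symm hBC' hAC' hB'l
    exact ⟨f, hf, h2, h1, h3⟩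
  · exact FT.proj_anchored h6 hlm hA hB hC hA' hB' hC' hAB hAC hBC
      hAB' hAC' hBC' hA'l

end FTaux

/-- **Fundamental Theorem.** Given any three distinct points `A, B, C` on a
line `l`, and any three distinct points `A', B', C'` on a line `m`, there
exists a projectivity from the range of `l` to the range of `m` sending
`A, B, C` to `A', B', C'` respectively; moreover it is unique, in the sense
that any two projectivities from the range of `l` to the range of `m` sending
`A, B, C` to `A', B', C'` respectively agree at every point of `l`. -/
theorem fundamental_theorem
    [Configuration.ProjectivePlane P L]
    (h6 : LinesHaveAtLeast P L 6) (hT : AxiomT P L)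
    (l m : L)
    (A B C : P) (hA : A ∈ l) (hB : B ∈ l) (hC : C ∈ l)
    (hAB : A ≠ B) (hAC : A ≠ C) (hBC : B ≠ C)
    (A' B' C' : P) (hA' : A' ∈ m) (hB' : B' ∈ m) (hC' : C' ∈ m)
    (hAB' : A' ≠ B') (hAC' : A' ≠ C') (hBC' : B' ≠ C') :
    (∃ f : Rng P L l → Rng P L m, IsProjectivity P L l m f ∧
      f ⟨A, hA⟩ = ⟨A', hA'⟩ ∧ f ⟨B, hB⟩ = ⟨B', hB'⟩ ∧ f ⟨C, hC⟩ = ⟨C', hC'⟩) ∧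
    ∀ f g : Rng P L l → Rng P L m,
      IsProjectivity P L l m f → IsProjectivity P L l m g →
      f ⟨A, hA⟩ = ⟨A', hA'⟩ → f ⟨B, hB⟩ = ⟨B', hB'⟩ → f ⟨C, hC⟩ = ⟨C', hC'⟩ →
      g ⟨A, hA⟩ = ⟨A', hA'⟩ → g ⟨B, hB⟩ = ⟨B', hB'⟩ → g ⟨C, hC⟩ = ⟨C', hC'⟩ →
      ∀ X : Rng P L l, f X = g X := by
  constructor
  · -- Existence
    by_cases hlm : l = m
    · subst hlm
      obtain ⟨n, -, hnl, -⟩ := FT.exists_line_through_ne h6 A l l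
      obtain ⟨O, hOl, hOn, -⟩ := FT.exists_off_two_ne h6 l n A
      have hinj : ∀ X Y : Rng P L l,
          FT.perspMap hOl hOn X = FT.perspMap hOl hOn Y → X = Y := by
        intro X Y h
        have := congrArg (FT.perspMap hOn hOl) h
        rwa [FT.perspMap_inv, FT.perspMap_inv] at this
      set A₀ := FT.perspMap hOl hOn ⟨A, hA⟩
      set B₀ := FT.perspMap hOl hOn ⟨B, hB⟩
      set C₀ := FT.perspMap hOl hOn ⟨C, hC⟩
      have d1 : (A₀ : P) ≠ (B₀ : P) := fun h =>
        hAB (Subtype.ext_iff.mp (hinj _ _ (Subtype.ext h)))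
      have d2 : (A₀ : P) ≠ (C₀ : P) := fun h =>
        hAC (Subtype.ext_iff.mp (hinj _ _ (Subtype.ext h)))
      have d3 : (B₀ : P) ≠ (C₀ : P) := fun h =>
        hBC (Subtype.ext_iff.mp (hinj _ _ (Subtype.ext h)))
      obtain ⟨f₂, hf₂, h1, h2, h3⟩ := FT.proj_of_ne h6 hnl A₀.2 B₀.2 C₀.2
        hA' hB' hC' d1 d2 d3 hAB' hAC' hBC'
      exact ⟨f₂ ∘ FT.perspMap hOl hOn,
        .comp (.persp (FT.perspMap_isPersp hOl hOn)) hf₂, h1, h2, h3⟩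
    · exact FT.proj_of_ne h6 hlm hA hB hC hA' hB' hC' hAB hAC hBC
        hAB' hAC' hBC'
  · -- Uniqueness
    intro f g hfp hgp hfA hfB hfC hgA hgB hgC X
    obtain ⟨g', hg', hleft, hright⟩ := FT.proj_inverse hgp
    have hfix : ∀ W, (g' ∘ f) W = W := by
      apply hT.1 l (g' ∘ f) (.comp hfp hg')
      refine ⟨⟨A, hA⟩, ⟨B, hB⟩, ⟨C, hC⟩,
        fun h => hAB (congrArg Subtype.val h),
        fun h => hAC (congrArg Subtype.val h),
        fun h => hBC (congrArg Subtype.val h), ?_, ?_, ?_⟩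
      · show g' (f ⟨A, hA⟩) = _
        rw [hfA, ← hgA]; exact hleft _
      · show g' (f ⟨B, hB⟩) = _
        rw [hfB, ← hgB]; exact hleft _
      · show g' (f ⟨C, hC⟩) = _
        rw [hfC, ← hgC]; exact hleft _
    have h1 : g' (f X) = X := hfix X
    have h2 := hright (f X)
    rw [h1] at h2
    exact h2.symm
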